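/- Let φ be the morphism with φ(0) = φ(2) = 0 and φ(1) = 1. Then φ(vtm) = pd, where pd is the period-doubling word. -/

import Mathlib

/-- The morphism `0 ↦ 012`, `1 ↦ 02`, `2 ↦ 1`. -/
def vtmMu : ℕ → List ℕ
  | 0 => [0, 1, 2]
  | 1 => [0, 2]
  | _ => [1]

/-- Iterates of the morphism on the letter `0`. -/
def vtmIter : ℕ → List ℕ
  | 0 => [0]
  | k + 1 => (vtmIter k).flatMap vtmMu

/-- The ternary squarefree Thue–Morse word. -/
def vtm (n : ℕ) : ℕ := (vtmIter (n + 1)).getD n 0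

/-- The period-doubling morphism `0 ↦ 01`, `1 ↦ 00`. -/
def pdMu : ℕ → List ℕ
  | 0 => [0, 1]
  | _ => [0, 0]

/-- Iterates of the period-doubling morphism on the letter `0`. -/
def pdIter : ℕ → List ℕ
  | 0 => [0]
  | k + 1 => (pdIter k).flatMap pdMu

/-- The period-doubling word, the fixed point of `0 ↦ 01`, `1 ↦ 00`. -/
def pd (n : ℕ) : ℕ := (pdIter (n + 1)).getD n 0

/-- The letter-to-letter morphism `φ` with `φ(0) = φ(2) = 0` and `φ(1) = 1`. -/
def phi (n : ℕ) : ℕ := if n = 1 then 1 else 0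

/-- Valid paths in the state machine tracking `#0 - #2` in prefixes. -/
inductive V : ℕ → List ℕ → ℕ → Prop where
  | nil : ∀ s, V s [] s
  | cons0 : ∀ {l t}, V 1 l t → V 0 (0 :: l) t
  | cons1 : ∀ {s l t}, V s l t → V s (1 :: l) t
  | cons2 : ∀ {a l t}, 2 ≤ a → V 0 l t → V 1 (a :: l) t

lemma V_append {s m t : ℕ} {u v : List ℕ} (hu : V s u m) (hv : V m v t) :
    V s (u ++ v) t := by
  induction hu with
  | nil => exact hv
  | cons0 _ ih => exact V.cons0 (ih hv)
  | cons1 _ ih => exact V.cons1 (ih hv)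
  | cons2 ha _ ih => exact V.cons2 ha (ih hv)

lemma V_mu (a : ℕ) : V 0 (vtmMu a) 0 := by
  match a with
  | 0 => exact V.cons0 (V.cons1 (V.cons2 (le_refl 2) (V.nil 0)))
  | 1 => exact V.cons0 (V.cons2 (le_refl 2) (V.nil 0))
  | (n+2) => exact V.cons1 (V.nil 0)

lemma V_flat (l : List ℕ) : V 0 (l.flatMap vtmMu) 0 := by
  induction l with
  | nil => exact V.nil 0
  | cons a l ih => exact V_append (V_mu a) ih

/-- Boundary adjustment word. -/
def F (s : ℕ) : List ℕ := if s = 1 then [0] else []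

lemma key {s t : ℕ} {l : List ℕ} (h : V s l t) :
    F s ++ (l.flatMap vtmMu).map phi = (l.map phi).flatMap pdMu ++ F t := by
  induction h with
  | nil s => simp
  | @cons0 l t _ ih =>
      have hih : (0:ℕ) :: (l.flatMap vtmMu).map phi = (l.map phi).flatMap pdMu ++ F t := by
        simpa [F] using ih
      simp only [List.flatMap_cons, List.map_cons, List.map_append]
      show [] ++ _ = _
      rw [List.nil_append, List.append_assoc, ← hih]
      rfl
  | @cons1 s l t _ ih =>
      simp only [List.flatMap_cons, List.map_cons, List.map_append]
      show F s ++ ([0, 0] ++ (l.flatMap vtmMu).map phi)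
          = pdMu (phi 1) ++ ((l.map phi).flatMap pdMu ++ F t)
      rw [← ih]
      have : pdMu (phi 1) = [0, 0] := rfl
      rw [this]
      by_cases hs : s = 1 <;> simp [F, hs]
  | @cons2 a l t ha _ ih =>
      have ha1 : a ≠ 1 := by omega
      obtain ⟨m, rfl⟩ : ∃ m, a = m + 2 := ⟨a - 2, by omega⟩
      have hih : (l.flatMap vtmMu).map phi = (l.map phi).flatMap pdMu ++ F t := by
        simpa [F] using ih
      simp only [List.flatMap_cons, List.map_cons, List.map_append]
      show [0] ++ ([1] ++ (l.flatMap vtmMu).map phi)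
          = pdMu (phi (m + 2)) ++ ((l.map phi).flatMap pdMu ++ F t)
      rw [← hih]
      have : pdMu (phi (m + 2)) = [0, 1] := by
        have h0 : phi (m + 2) = 0 := by simp [phi]
        rw [h0]; rfl
      rw [this]
      rfl

lemma flatMap_prefix (f : ℕ → List ℕ) {u v : List ℕ} (h : u <+: v) :
    u.flatMap f <+: v.flatMap f := by
  obtain ⟨r, rfl⟩ := h
  rw [List.flatMap_append]
  exact ⟨_, rfl⟩

lemma pd_flat_len (l : List ℕ) : (l.flatMap pdMu).length = 2 * l.length := by
  induction l with
  | nil => simp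
  | cons a l ih =>
      have : (pdMu a).length = 2 := by
        match a with
        | 0 => rfl
        | (n+1) => rfl
      simp [List.flatMap_cons, this, ih]; ring

lemma pd_len (k : ℕ) : (pdIter k).length = 2 ^ k := by
  induction k with
  | zero => rfl
  | succ k ih => rw [pdIter, pd_flat_len, ih, pow_succ]; ring

lemma pdIter_prefix (k : ℕ) : pdIter k <+: pdIter (k + 1) := by
  induction k with
  | zero => exact ⟨[1], rfl⟩
  | succ k ih => exact flatMap_prefix pdMu ih

lemma pdIter_prefix_le {j k : ℕ} (h : j ≤ k) : pdIter j <+: pdIter k := by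
  induction k with
  | zero => rw [Nat.le_zero.mp h]
  | succ k ih =>
      rcases Nat.lt_or_ge j (k+1) with h' | h'
      · exact (ih (Nat.lt_succ_iff.mp h')).trans (pdIter_prefix k)
      · rw [le_antisymm h h']

lemma V_iter (k : ℕ) : ∃ t, t ≤ 1 ∧ V 0 (vtmIter k) t := by
  match k with
  | 0 => exact ⟨1, le_refl 1, V.cons0 (V.nil 1)⟩
  | (k+1) => exact ⟨0, by norm_num, V_flat (vtmIter k)⟩

lemma vtm_len_rel (k : ℕ) :
    ∃ t, t ≤ 1 ∧ (vtmIter (k+1)).length = 2 * (vtmIter k).length + (F t).length := by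
  obtain ⟨t, ht, hV⟩ := V_iter k
  refine ⟨t, ht, ?_⟩
  have h := congrArg List.length (key hV)
  rw [List.length_append, List.length_append, List.length_map, pd_flat_len,
    List.length_map] at h
  have hid : (vtmIter k).flatMap vtmMu = vtmIter (k + 1) := rfl
  rw [hid] at h
  have hF0 : (F 0).length = 0 := rfl
  omega

lemma vtm_len_ub (k : ℕ) : (vtmIter k).length ≤ 2 ^ (k + 1) - 1 := by
  induction k with
  | zero => simp [vtmIter]
  | succ k ih =>
      obtain ⟨t, ht, hlen⟩ := vtm_len_rel k
      have hF : (F t).length ≤ 1 := by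
        by_cases h : t = 1 <;> simp [F, h]
      have h2 : (1:ℕ) ≤ 2 ^ (k + 1) := Nat.one_le_two_pow
      have : 2 ^ (k + 2) = 2 * 2 ^ (k + 1) := by ring
      omega

lemma vtm_len_lb (k : ℕ) : 2 ^ k ≤ (vtmIter k).length := by
  induction k with
  | zero => simp [vtmIter]
  | succ k ih =>
      obtain ⟨t, _, hlen⟩ := vtm_len_rel k
      have : 2 ^ (k + 1) = 2 * 2 ^ k := by ring
      omega

lemma pdMu_pair (b : ℕ) : ∃ c, pdMu b = [0, c] := by
  match b with
  | 0 => exact ⟨1, rfl⟩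
  | (n+1) => exact ⟨0, rfl⟩

lemma main_prefix (k : ℕ) : (vtmIter k).map phi <+: pdIter (k + 1) := by
  induction k with
  | zero => exact ⟨[1], by simp [vtmIter, pdIter, pdMu, phi]⟩
  | succ k ih =>
      obtain ⟨t, ht, hV⟩ := V_iter k
      have hk := key hV
      have h0 : F 0 = [] := by simp [F]
      rw [h0, List.nil_append] at hk
      have hmain : (vtmIter (k+1)).map phi
          = ((vtmIter k).map phi).flatMap pdMu ++ F t := hk
      by_cases h1 : t = 1
      · -- need strict prefix extension
        obtain ⟨r, hr⟩ := ih
        have hlen : ((vtmIter k).map phi).length < (pdIter (k+1)).length := by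
          rw [List.length_map, pd_len]
          have := vtm_len_ub k
          have : (1:ℕ) ≤ 2 ^ (k+1) := Nat.one_le_two_pow
          omega
        have hrne : r ≠ [] := by
          intro h
          rw [h, List.append_nil] at hr
          rw [hr] at hlen
          omega
        obtain ⟨b, r', rfl⟩ := List.exists_cons_of_ne_nil hrne
        have hpref2 : (vtmIter k).map phi ++ [b] <+: pdIter (k+1) :=
          ⟨r', by rw [← hr]; simp⟩
        have hstep : ((vtmIter k).map phi ++ [b]).flatMap pdMu <+: pdIter (k+2) :=
          flatMap_prefix pdMu hpref2
        obtain ⟨c, hc⟩ := pdMu_pair b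
        rw [List.flatMap_append] at hstep
        simp only [List.flatMap_cons, List.flatMap_nil, hc, List.append_nil] at hstep
        rw [hmain, h1]
        show ((vtmIter k).map phi).flatMap pdMu ++ [0] <+: pdIter (k + 2)
        refine List.IsPrefix.trans ?_ hstep
        exact ⟨[c], by simp⟩
      · have hF : F t = [] := by simp [F, h1]
        rw [hmain, hF, List.append_nil]
        exact flatMap_prefix pdMu ih

lemma prefix_getD {u v : List ℕ} (h : u <+: v) {n : ℕ} (hn : n < u.length) :
    u.getD n 0 = v.getD n 0 := by
  obtain ⟨r, rfl⟩ := h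
  rw [List.getD_eq_getElem _ _ hn,
    List.getD_eq_getElem _ _ (by simp; omega), List.getElem_append_left hn]

theorem phi_vtm_eq_pd : ∀ n : ℕ, phi (vtm n) = pd n := by
  intro n
  have hlb := vtm_len_lb (n + 1)
  have hn : n < (vtmIter (n+1)).length :=
    lt_of_lt_of_le ((Nat.lt_two_pow_self (n := n)).trans_le
      (Nat.pow_le_pow_right (by norm_num) (by omega))) hlb
  have h1 : phi (vtm n) = ((vtmIter (n+1)).map phi).getD n 0 := by
    rw [vtm, List.getD_eq_getElem _ _ hn,
      List.getD_eq_getElem _ _ (by simpa using hn), List.getElem_map]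
  have h2 : ((vtmIter (n+1)).map phi).getD n 0 = (pdIter (n+2)).getD n 0 :=
    prefix_getD (main_prefix (n+1)) (by simpa using hn)
  have h3 : (pdIter (n+1)).getD n 0 = (pdIter (n+2)).getD n 0 :=
    prefix_getD (pdIter_prefix (n+1))
      (by
        rw [pd_len]
        exact (Nat.lt_two_pow_self (n := n)).trans_le (Nat.pow_le_pow_right (by norm_num) (by omega)))
  rw [h1, h2, pd, h3]
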